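/- Let a ∈ ℝ \ {0,1} and g₀,…,g₄, f₀,…,f₄ ∈ ℝ. Define R(t) = g₀(t−1)²(t−a)² + g₁t²(t−a)² + g₂t²(t−1)² + g₃t²(t−1)(t−a) + g₄t(t−1)(t−a), S(t) = f₀(t−1)²(t−a)² + f₁t²(t−a)² + f₂t²(t−1)² + f₃t²(t−1)(t−a) + f₄t(t−1)(t−a), and G(t) = 3t² − 2(a+1)t + a. Let y be three times differentiable on an open interval I ⊆ ℝ with y'(x) ≠ 0, y(x) ∉ {0,1,a}, R(y(x)) ≠ 0, and (y'(x))² = 4·y(x)²·(y(x)−1)²·(y(x)−a)²/R(y(x)) for all x ∈ I. Then for every x ∈ I (writing y = y(x)): −S(y)/R(y) − (1/2)·{y,x}(x) = (y²(y−1)²(y−a)²/R(y)²)·[ R''(y) + (G(y)·R'(y) − 2·R(y)·G'(y))/(y(y−1)(y−a)) + R(y)·G(y)²/(y²(y−1)²(y−a)²) − (5/4)·R'(y)²/R(y) ] − S(y)/R(y). -/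

import Mathlib

/-- The numerator polynomial `R` of the Heun-class Bose invariant. -/
def heunR (a g₀ g₁ g₂ g₃ g₄ : ℝ) : ℝ → ℝ := fun t =>
  g₀ * (t - 1) ^ 2 * (t - a) ^ 2 + g₁ * t ^ 2 * (t - a) ^ 2 + g₂ * t ^ 2 * (t - 1) ^ 2
    + g₃ * t ^ 2 * (t - 1) * (t - a) + g₄ * t * (t - 1) * (t - a)

/-- The polynomial `S` of the Heun-class Bose invariant. -/
def heunS (a f₀ f₁ f₂ f₃ f₄ : ℝ) : ℝ → ℝ := fun t =>
  f₀ * (t - 1) ^ 2 * (t - a) ^ 2 + f₁ * t ^ 2 * (t - a) ^ 2 + f₂ * t ^ 2 * (t - 1) ^ 2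
    + f₃ * t ^ 2 * (t - 1) * (t - a) + f₄ * t * (t - 1) * (t - a)

/-- `G(t) = 3t² − 2(a+1)t + a`. -/
def heunG (a : ℝ) : ℝ → ℝ := fun t => 3 * t ^ 2 - 2 * (a + 1) * t + a

/-- First derivative of `heunR`. -/
def heunR' (a g₀ g₁ g₂ g₃ g₄ : ℝ) : ℝ → ℝ := fun t =>
  g₀ * (2 * (t - 1) * (t - a) ^ 2 + 2 * (t - 1) ^ 2 * (t - a))
    + g₁ * (2 * t * (t - a) ^ 2 + 2 * t ^ 2 * (t - a))
    + g₂ * (2 * t * (t - 1) ^ 2 + 2 * t ^ 2 * (t - 1))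
    + g₃ * (2 * t * (t - 1) * (t - a) + t ^ 2 * (t - a) + t ^ 2 * (t - 1))
    + g₄ * ((t - 1) * (t - a) + t * (t - a) + t * (t - 1))

/-- Second derivative of `heunR`. -/
def heunR'' (a g₀ g₁ g₂ g₃ g₄ : ℝ) : ℝ → ℝ := fun t =>
  g₀ * (2 * (t - a) ^ 2 + 8 * (t - 1) * (t - a) + 2 * (t - 1) ^ 2)
    + g₁ * (2 * (t - a) ^ 2 + 8 * t * (t - a) + 2 * t ^ 2)
    + g₂ * (2 * (t - 1) ^ 2 + 8 * t * (t - 1) + 2 * t ^ 2)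
    + g₃ * (2 * (t - 1) * (t - a) + 4 * t * (t - a) + 4 * t * (t - 1) + 2 * t ^ 2)
    + g₄ * (6 * t - 2 - 2 * a)

/-- `Q(t) = t²(t−1)²(t−a)²`. -/
def heunQ (a : ℝ) : ℝ → ℝ := fun t => t ^ 2 * (t - 1) ^ 2 * (t - a) ^ 2

/-- First derivative of `heunQ`. -/
def heunQ' (a : ℝ) : ℝ → ℝ := fun t =>
  2 * t * (t - 1) ^ 2 * (t - a) ^ 2 + 2 * t ^ 2 * (t - 1) * (t - a) ^ 2
    + 2 * t ^ 2 * (t - 1) ^ 2 * (t - a)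

/-- Second derivative of `heunQ`. -/
def heunQ'' (a : ℝ) : ℝ → ℝ := fun t =>
  2 * (t - 1) ^ 2 * (t - a) ^ 2 + 2 * t ^ 2 * (t - a) ^ 2 + 2 * t ^ 2 * (t - 1) ^ 2
    + 8 * t * (t - 1) * (t - a) ^ 2 + 8 * t * (t - 1) ^ 2 * (t - a)
    + 8 * t ^ 2 * (t - 1) * (t - a)

/-- Derivative of `F = 4Q/R`. -/
noncomputable def heunFd (a g₀ g₁ g₂ g₃ g₄ : ℝ) : ℝ → ℝ := fun t =>
  (4 * heunQ' a t * heunR a g₀ g₁ g₂ g₃ g₄ t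
      - 4 * heunQ a t * heunR' a g₀ g₁ g₂ g₃ g₄ t) / heunR a g₀ g₁ g₂ g₃ g₄ t ^ 2

/-- Derivative of `heunFd`. -/
noncomputable def heunFdd (a g₀ g₁ g₂ g₃ g₄ : ℝ) : ℝ → ℝ := fun t =>
  (((4 * heunQ'' a t * heunR a g₀ g₁ g₂ g₃ g₄ t + 4 * heunQ' a t * heunR' a g₀ g₁ g₂ g₃ g₄ t)
      - (4 * heunQ' a t * heunR' a g₀ g₁ g₂ g₃ g₄ t
          + 4 * heunQ a t * heunR'' a g₀ g₁ g₂ g₃ g₄ t)) * heunR a g₀ g₁ g₂ g₃ g₄ t ^ 2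
    - (4 * heunQ' a t * heunR a g₀ g₁ g₂ g₃ g₄ t
        - 4 * heunQ a t * heunR' a g₀ g₁ g₂ g₃ g₄ t)
        * (2 * heunR a g₀ g₁ g₂ g₃ g₄ t * heunR' a g₀ g₁ g₂ g₃ g₄ t))
    / (heunR a g₀ g₁ g₂ g₃ g₄ t ^ 2) ^ 2

lemma heunR_hasDerivAt (a g₀ g₁ g₂ g₃ g₄ t : ℝ) :
    HasDerivAt (heunR a g₀ g₁ g₂ g₃ g₄) (heunR' a g₀ g₁ g₂ g₃ g₄ t) t := by
  have hid := hasDerivAt_id t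
  have hm1 := hid.sub_const (1:ℝ)
  have hma := hid.sub_const a
  have h : HasDerivAt (heunR a g₀ g₁ g₂ g₃ g₄) _ t := (((((((hm1.pow 2).const_mul g₀).mul (hma.pow 2)).add
      (((hid.pow 2).const_mul g₁).mul (hma.pow 2))).add
      (((hid.pow 2).const_mul g₂).mul (hm1.pow 2))).add
      ((((hid.pow 2).const_mul g₃).mul hm1).mul hma)).add
      (((hid.const_mul g₄).mul hm1).mul hma))
  convert h using 1
  simp only [heunR', id_eq, Pi.pow_apply, Pi.mul_apply]
  push_cast
  ring

lemma heunR'_hasDerivAt (a g₀ g₁ g₂ g₃ g₄ t : ℝ) :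
    HasDerivAt (heunR' a g₀ g₁ g₂ g₃ g₄) (heunR'' a g₀ g₁ g₂ g₃ g₄ t) t := by
  have hid := hasDerivAt_id t
  have hm1 := hid.sub_const (1:ℝ)
  have hma := hid.sub_const a
  have t0 := (((hm1.const_mul (2:ℝ)).mul (hma.pow 2)).add
    (((hm1.pow 2).const_mul (2:ℝ)).mul hma)).const_mul g₀
  have t1 := (((hid.const_mul (2:ℝ)).mul (hma.pow 2)).add
    (((hid.pow 2).const_mul (2:ℝ)).mul hma)).const_mul g₁
  have t2 := (((hid.const_mul (2:ℝ)).mul (hm1.pow 2)).add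
    (((hid.pow 2).const_mul (2:ℝ)).mul hm1)).const_mul g₂
  have t3 := (((((hid.const_mul (2:ℝ)).mul hm1).mul hma).add
    ((hid.pow 2).mul hma)).add ((hid.pow 2).mul hm1)).const_mul g₃
  have t4 := (((hm1.mul hma).add (hid.mul hma)).add (hid.mul hm1)).const_mul g₄
  have h : HasDerivAt (heunR' a g₀ g₁ g₂ g₃ g₄) _ t := (((t0.add t1).add t2).add t3).add t4
  convert h using 1
  simp only [heunR'', id_eq, Pi.pow_apply, Pi.mul_apply]
  push_cast
  ring

lemma heunQ_hasDerivAt (a t : ℝ) : HasDerivAt (heunQ a) (heunQ' a t) t := by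
  have hid := hasDerivAt_id t
  have hm1 := hid.sub_const (1:ℝ)
  have hma := hid.sub_const a
  have h : HasDerivAt (heunQ a) _ t := ((hid.pow 2).mul (hm1.pow 2)).mul (hma.pow 2)
  convert h using 1
  simp only [heunQ', id_eq, Pi.pow_apply, Pi.mul_apply]
  push_cast
  ring

lemma heunQ'_hasDerivAt (a t : ℝ) : HasDerivAt (heunQ' a) (heunQ'' a t) t := by
  have hid := hasDerivAt_id t
  have hm1 := hid.sub_const (1:ℝ)
  have hma := hid.sub_const a
  have h : HasDerivAt (heunQ' a) _ t := ((((hid.const_mul (2:ℝ)).mul (hm1.pow 2)).mul (hma.pow 2)).add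
      ((((hid.pow 2).const_mul (2:ℝ)).mul hm1).mul (hma.pow 2))).add
      ((((hid.pow 2).const_mul (2:ℝ)).mul (hm1.pow 2)).mul hma)
  convert h using 1
  simp only [heunQ'', id_eq, Pi.pow_apply, Pi.mul_apply]
  push_cast
  ring

lemma heunG_hasDerivAt (a t : ℝ) : HasDerivAt (heunG a) (6 * t - 2 * (a + 1)) t := by
  have hid := hasDerivAt_id t
  have h : HasDerivAt (heunG a) _ t := (((hid.pow 2).const_mul (3:ℝ)).sub (hid.const_mul (2*(a+1)))).add_const a
  convert h using 1
  simp only [id_eq, Pi.pow_apply]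
  push_cast
  ring

lemma deriv_heunR (a g₀ g₁ g₂ g₃ g₄ : ℝ) :
    deriv (heunR a g₀ g₁ g₂ g₃ g₄) = heunR' a g₀ g₁ g₂ g₃ g₄ :=
  funext fun t => (heunR_hasDerivAt a g₀ g₁ g₂ g₃ g₄ t).deriv

lemma heunF_hasDerivAt (a g₀ g₁ g₂ g₃ g₄ t : ℝ) (hRt : heunR a g₀ g₁ g₂ g₃ g₄ t ≠ 0) :
    HasDerivAt (fun s => 4 * heunQ a s / heunR a g₀ g₁ g₂ g₃ g₄ s)
      (heunFd a g₀ g₁ g₂ g₃ g₄ t) t := by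
  have h := ((heunQ_hasDerivAt a t).const_mul (4:ℝ)).div (heunR_hasDerivAt a g₀ g₁ g₂ g₃ g₄ t) hRt
  exact h

lemma heunFd_hasDerivAt (a g₀ g₁ g₂ g₃ g₄ t : ℝ) (hRt : heunR a g₀ g₁ g₂ g₃ g₄ t ≠ 0) :
    HasDerivAt (heunFd a g₀ g₁ g₂ g₃ g₄) (heunFdd a g₀ g₁ g₂ g₃ g₄ t) t := by
  have hnum := (((heunQ'_hasDerivAt a t).const_mul (4:ℝ)).mul
      (heunR_hasDerivAt a g₀ g₁ g₂ g₃ g₄ t)).sub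
    (((heunQ_hasDerivAt a t).const_mul (4:ℝ)).mul (heunR'_hasDerivAt a g₀ g₁ g₂ g₃ g₄ t))
  have hden := (heunR_hasDerivAt a g₀ g₁ g₂ g₃ g₄ t).pow 2
  have h : HasDerivAt (heunFd a g₀ g₁ g₂ g₃ g₄) _ t := hnum.div hden (pow_ne_zero 2 hRt)
  convert h using 1
  simp only [heunFdd, Pi.sub_apply, Pi.mul_apply]
  push_cast
  ring

/-- closed form of the potential `V_H` of the Heun class. -/
theorem stmt_13 (a : ℝ) (ha0 : a ≠ 0) (ha1 : a ≠ 1)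
    (g₀ g₁ g₂ g₃ g₄ f₀ f₁ f₂ f₃ f₄ : ℝ) (y : ℝ → ℝ) (I : Set ℝ) (hI : IsOpen I)
    (hy : ∀ x ∈ I, DifferentiableAt ℝ y x)
    (hy' : ∀ x ∈ I, DifferentiableAt ℝ (deriv y) x)
    (hy'' : ∀ x ∈ I, DifferentiableAt ℝ (deriv (deriv y)) x)
    (hy0 : ∀ x ∈ I, deriv y x ≠ 0)
    (hy01a : ∀ x ∈ I, y x ≠ 0 ∧ y x ≠ 1 ∧ y x ≠ a)
    (hR : ∀ x ∈ I, heunR a g₀ g₁ g₂ g₃ g₄ (y x) ≠ 0)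
    (heq : ∀ x ∈ I, (deriv y x) ^ 2
      = 4 * (y x) ^ 2 * (y x - 1) ^ 2 * (y x - a) ^ 2 / heunR a g₀ g₁ g₂ g₃ g₄ (y x)) :
    ∀ x ∈ I,
      -(heunS a f₀ f₁ f₂ f₃ f₄ (y x)) / heunR a g₀ g₁ g₂ g₃ g₄ (y x)
          - (1 / 2) * (deriv (fun t => deriv (deriv y) t / deriv y t) x
              - (1 / 2) * (deriv (deriv y) x / deriv y x) ^ 2)
        = ((y x) ^ 2 * (y x - 1) ^ 2 * (y x - a) ^ 2
              / (heunR a g₀ g₁ g₂ g₃ g₄ (y x)) ^ 2) *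
            (deriv (deriv (heunR a g₀ g₁ g₂ g₃ g₄)) (y x)
              + (heunG a (y x) * deriv (heunR a g₀ g₁ g₂ g₃ g₄) (y x)
                  - 2 * heunR a g₀ g₁ g₂ g₃ g₄ (y x) * deriv (heunG a) (y x))
                / (y x * (y x - 1) * (y x - a))
              + heunR a g₀ g₁ g₂ g₃ g₄ (y x) * (heunG a (y x)) ^ 2
                / ((y x) ^ 2 * (y x - 1) ^ 2 * (y x - a) ^ 2)
              - (5 / 4) * (deriv (heunR a g₀ g₁ g₂ g₃ g₄) (y x)) ^ 2
                / heunR a g₀ g₁ g₂ g₃ g₄ (y x))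
          - heunS a f₀ f₁ f₂ f₃ f₄ (y x) / heunR a g₀ g₁ g₂ g₃ g₄ (y x) := by
  -- second derivative of y in terms of `heunFd`
  have key2 : ∀ x ∈ I, deriv (deriv y) x = heunFd a g₀ g₁ g₂ g₃ g₄ (y x) / 2 := by
    intro x hx
    have hEv : (fun z => deriv y z ^ 2)
        =ᶠ[nhds x] (fun z => 4 * heunQ a (y z) / heunR a g₀ g₁ g₂ g₃ g₄ (y z)) :=
      Filter.eventuallyEq_of_mem (hI.mem_nhds hx) (fun z hz => by
        show _ = _; rw [heq z hz]; unfold heunQ; ring)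
    have hL : HasDerivAt (fun z => deriv y z ^ 2) _ x := ((hy' x hx).hasDerivAt).pow 2
    have hRc : HasDerivAt (fun z => 4 * heunQ a (y z) / heunR a g₀ g₁ g₂ g₃ g₄ (y z))
        (heunFd a g₀ g₁ g₂ g₃ g₄ (y x) * deriv y x) x :=
      (heunF_hasDerivAt a g₀ g₁ g₂ g₃ g₄ (y x) (hR x hx)).comp x ((hy x hx).hasDerivAt)
    have h2 := hEv.deriv_eq
    rw [hL.deriv, hRc.deriv] at h2
    have hc := hy0 x hx
    have h3 : (2 * deriv (deriv y) x) * deriv y x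
        = (heunFd a g₀ g₁ g₂ g₃ g₄ (y x)) * deriv y x := by
      push_cast at h2
      linear_combination h2
    have h4 := mul_right_cancel₀ hc h3
    linarith
  intro x hx
  have hc := hy0 x hx
  have ht0 := (hy01a x hx).1
  have ht1 : y x - 1 ≠ 0 := sub_ne_zero.mpr (hy01a x hx).2.1
  have hta : y x - a ≠ 0 := sub_ne_zero.mpr (hy01a x hx).2.2
  have hRt := hR x hx
  have hQt : heunQ a (y x) ≠ 0 := by
    unfold heunQ
    positivity
  have hc2 : deriv y x ^ 2 = 4 * heunQ a (y x) / heunR a g₀ g₁ g₂ g₃ g₄ (y x) := by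
    rw [heq x hx]; unfold heunQ; ring
  -- third derivative of y
  have hEv2 : deriv (deriv y) =ᶠ[nhds x] fun z => heunFd a g₀ g₁ g₂ g₃ g₄ (y z) / 2 :=
    Filter.eventuallyEq_of_mem (hI.mem_nhds hx) (fun z hz => key2 z hz)
  have hRHS : HasDerivAt (fun z => heunFd a g₀ g₁ g₂ g₃ g₄ (y z) / 2)
      (heunFdd a g₀ g₁ g₂ g₃ g₄ (y x) * deriv y x / 2) x :=
    ((heunFd_hasDerivAt a g₀ g₁ g₂ g₃ g₄ (y x) hRt).comp x ((hy x hx).hasDerivAt)).div_const 2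
  have h3 : deriv (deriv (deriv y)) x = heunFdd a g₀ g₁ g₂ g₃ g₄ (y x) * deriv y x / 2 := by
    rw [hEv2.deriv_eq, hRHS.deriv]
  -- the quotient derivative
  have hq : HasDerivAt (fun t => deriv (deriv y) t / deriv y t) _ x := ((hy'' x hx).hasDerivAt).div ((hy' x hx).hasDerivAt) hc
  rw [hq.deriv, h3, key2 x hx]
  -- eliminate deriv y x
  have hA : (heunFdd a g₀ g₁ g₂ g₃ g₄ (y x) * deriv y x / 2 * deriv y x
        - heunFd a g₀ g₁ g₂ g₃ g₄ (y x) / 2 * (heunFd a g₀ g₁ g₂ g₃ g₄ (y x) / 2))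
        / deriv y x ^ 2
      = heunFdd a g₀ g₁ g₂ g₃ g₄ (y x) / 2
        - (heunFd a g₀ g₁ g₂ g₃ g₄ (y x)) ^ 2 * heunR a g₀ g₁ g₂ g₃ g₄ (y x)
            / (16 * heunQ a (y x)) := by
    have e1 : (heunFdd a g₀ g₁ g₂ g₃ g₄ (y x) * deriv y x / 2 * deriv y x
          - heunFd a g₀ g₁ g₂ g₃ g₄ (y x) / 2 * (heunFd a g₀ g₁ g₂ g₃ g₄ (y x) / 2))
          / deriv y x ^ 2
        = heunFdd a g₀ g₁ g₂ g₃ g₄ (y x) / 2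
          - (heunFd a g₀ g₁ g₂ g₃ g₄ (y x)) ^ 2 / (4 * deriv y x ^ 2) := by
      field_simp
      ring
    rw [e1, hc2]
    field_simp
    ring
  have hB : (heunFd a g₀ g₁ g₂ g₃ g₄ (y x) / 2 / deriv y x) ^ 2
      = (heunFd a g₀ g₁ g₂ g₃ g₄ (y x)) ^ 2 * heunR a g₀ g₁ g₂ g₃ g₄ (y x)
          / (16 * heunQ a (y x)) := by
    rw [div_pow, div_pow, hc2]
    field_simp
    ring
  rw [hA, hB, deriv_heunR a g₀ g₁ g₂ g₃ g₄,
    (heunR'_hasDerivAt a g₀ g₁ g₂ g₃ g₄ (y x)).deriv, (heunG_hasDerivAt a (y x)).deriv]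
  -- now a purely algebraic identity in `y x`
  unfold heunFdd heunFd heunQ'' heunQ' heunQ heunG
  field_simp
  ring
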